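/- In the discrete Heisenberg group G of integer 3×3 upper unitriangular matrices, the set S = {T₃^{n₃}T₂^{n₂}T₁^{n₁} : n₃ ≥ n₂ ≥ 0 and n₃² ≥ n₁ ≥ 0} is closed under matrix multiplication, where T₁, T₂, T₃ are the standard elementary generators (T₁ has a 1 in the (1,3) entry, T₂ in the (1,2) entry, T₃ in the (2,3) entry, and 1's on the diagonal). -/

import Mathlib

/-- The Heisenberg matrix T₃^{n₃}T₂^{n₂}T₁^{n₁}: first row (1, n₂, n₁),
second row (0, 1, n₃), third row (0, 0, 1). -/
def heisMat (n₁ n₂ n₃ : ℤ) : Matrix (Fin 3) (Fin 3) ℤ :=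
  !![1, n₂, n₁; 0, 1, n₃; 0, 0, 1]

lemma heisMat_mul (a₁ a₂ a₃ b₁ b₂ b₃ : ℤ) :
    heisMat a₁ a₂ a₃ * heisMat b₁ b₂ b₃ =
      heisMat (a₁ + b₁ + a₂ * b₃) (a₂ + b₂) (a₃ + b₃) := by
  simp [heisMat, Matrix.mul_fin_three]
  ring_nf
  simp


/-- The semigroup S in the Heisenberg group. -/
def heisS : Set (Matrix (Fin 3) (Fin 3) ℤ) :=
  {A | ∃ n₁ n₂ n₃ : ℤ, A = heisMat n₁ n₂ n₃ ∧
    n₂ ≤ n₃ ∧ 0 ≤ n₂ ∧ n₁ ≤ n₃ ^ 2 ∧ 0 ≤ n₁}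

/-- S is closed under matrix multiplication. -/
theorem heisS_mul_closed : ∀ A ∈ heisS, ∀ B ∈ heisS, A * B ∈ heisS := by
  rintro A ⟨a₁, a₂, a₃, rfl, ha23, ha2, ha13, ha1⟩
    B ⟨b₁, b₂, b₃, rfl, hb23, hb2, hb13, hb1⟩
  refine ⟨a₁ + b₁ + a₂ * b₃, a₂ + b₂, a₃ + b₃, heisMat_mul .., ?_, ?_, ?_, ?_⟩
  · linarith
  · linarith
  · nlinarith
  · nlinarith
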